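/- Let G be a finite simple graph on n vertices, let L be its Laplacian matrix over ℝ, and let Δ be the maximum degree of G. Then for all s, ŝ ∈ ℝⁿ with ‖s‖ ≤ 1 and ‖ŝ‖ ≤ 1 (Euclidean norm), |sᵀ(I + L)⁻¹ L (I + L)⁻¹ s − ŝᵀ(I + L)⁻¹ L (I + L)⁻¹ ŝ| ≤ 2Δ·‖s − ŝ‖. That is, the D-Undir objective s ↦ sᵀ(I + L)⁻¹ L (I + L)⁻¹ s is Lipschitz continuous on the closed unit ball with Lipschitz constant K = 2Δ. -/

import Mathlib

open Matrix
open scoped RealInnerProductSpace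

section Aux

variable {n : ℕ}

private lemma toEuclideanLin_mul_apply (A B : Matrix (Fin n) (Fin n) ℝ)
    (x : EuclideanSpace ℝ (Fin n)) :
    Matrix.toEuclideanLin (A * B) x =
      Matrix.toEuclideanLin A (Matrix.toEuclideanLin B x) := by
  simp [Matrix.toEuclideanLin_apply, Matrix.mulVec_mulVec]

private lemma inner_toEuclideanLin (M : Matrix (Fin n) (Fin n) ℝ)
    (x y : EuclideanSpace ℝ (Fin n)) :
    ⟪x, Matrix.toEuclideanLin M y⟫ =
      dotProduct (WithLp.equiv 2 _ x) (M *ᵥ (WithLp.equiv 2 _ y)) := by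
  simp [PiLp.inner_apply, Matrix.toEuclideanLin_apply, dotProduct]
  exact Finset.sum_congr rfl fun _ _ => mul_comm _ _

private lemma abstract_lipschitz {E : Type*} [NormedAddCommGroup E]
    [InnerProductSpace ℝ E] (T S : E →ₗ[ℝ] E)
    (hT : ∀ x y, ⟪T x, y⟫ = ⟪x, T y⟫)
    (hS : ∀ x y, ⟪S x, y⟫ = ⟪x, S y⟫)
    (hTpos : ∀ x, 0 ≤ ⟪x, T x⟫)
    (hinv : ∀ x, S x + T (S x) = x)
    (s t : E) (hs : ‖s‖ ≤ 1) (ht : ‖t‖ ≤ 1) :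
    |⟪s, S (T (S s))⟫ - ⟪t, S (T (S t))⟫| ≤ 2 * ‖s - t‖ := by
  -- S is a contraction
  have hcontr : ∀ x, ‖S x‖ ≤ ‖x‖ := by
    intro x
    have h1 : ‖S x‖ ^ 2 ≤ ‖S x‖ * ‖x‖ := by
      have h2 : ⟪S x, S x⟫ + ⟪S x, T (S x)⟫ = ⟪S x, x⟫ := by
        rw [← inner_add_right, hinv]
      calc ‖S x‖ ^ 2 = ⟪S x, S x⟫ := (real_inner_self_eq_norm_sq _).symm
        _ ≤ ⟪S x, x⟫ := by nlinarith [hTpos (S x)]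
        _ ≤ ‖S x‖ * ‖x‖ := real_inner_le_norm _ _
    nlinarith [norm_nonneg (S x), norm_nonneg x]
  -- quadratic form bound
  have hq : ∀ x, ⟪S x, T (S x)⟫ ≤ ‖x‖ ^ 2 := by
    intro x
    have h2 : ⟪S x, S x⟫ + ⟪S x, T (S x)⟫ = ⟪S x, x⟫ := by
      rw [← inner_add_right, hinv]
    have h3 : ⟪S x, x⟫ ≤ ‖S x‖ * ‖x‖ := real_inner_le_norm _ _
    have h4 := hcontr x
    have h5 : ⟪S x, S x⟫ = ‖S x‖ ^ 2 := real_inner_self_eq_norm_sq _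
    nlinarith [norm_nonneg x, norm_nonneg (S x)]
  -- Cauchy–Schwarz for the semi-definite form
  have hCS : ∀ a b, ⟪a, T b⟫ ^ 2 ≤ ⟪a, T a⟫ * ⟪b, T b⟫ := by
    intro a b
    have hpoly : ∀ r : ℝ, 0 ≤ ⟪b, T b⟫ * (r * r) + (2 * ⟪a, T b⟫) * r + ⟪a, T a⟫ := by
      intro r
      have hsymm : ⟪b, T a⟫ = ⟪a, T b⟫ := by rw [← hT a b, real_inner_comm]
      have expand : ⟪a + r • b, T (a + r • b)⟫ =
          ⟪a, T a⟫ + 2 * r * ⟪a, T b⟫ + r * r * ⟪b, T b⟫ := by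
        simp only [map_add, LinearMap.map_smul, inner_add_left, inner_add_right,
          real_inner_smul_left, real_inner_smul_right, hsymm]
        ring
      have hnn := hTpos (a + r • b)
      rw [expand] at hnn
      nlinarith [hnn]
    have hd := discrim_le_zero hpoly
    rw [discrim] at hd
    nlinarith [hd]
  have habs : ∀ a b, |⟪a, T b⟫| ≤ Real.sqrt ⟪a, T a⟫ * Real.sqrt ⟪b, T b⟫ := by
    intro a b
    have h1 : |⟪a, T b⟫| = Real.sqrt (⟪a, T b⟫ ^ 2) := by
      rw [Real.sqrt_sq_eq_abs]
    rw [h1, ← Real.sqrt_mul (hTpos a)]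
    exact Real.sqrt_le_sqrt (hCS a b)
  have hsqrtq : ∀ x, Real.sqrt ⟪S x, T (S x)⟫ ≤ ‖x‖ := by
    intro x
    calc Real.sqrt ⟪S x, T (S x)⟫ ≤ Real.sqrt (‖x‖ ^ 2) := Real.sqrt_le_sqrt (hq x)
      _ = ‖x‖ := Real.sqrt_sq (norm_nonneg x)
  -- rewrite the two quadratic values
  have hform : ∀ x, ⟪x, S (T (S x))⟫ = ⟪S x, T (S x)⟫ := by
    intro x
    rw [real_inner_comm, hS, real_inner_comm]
  rw [hform s, hform t]
  set u := S s with hu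
  set v := S t with hv
  have huv : u - v = S (s - t) := by rw [hu, hv, map_sub]
  have hdiff : ⟪u, T u⟫ - ⟪v, T v⟫ = ⟪u - v, T u⟫ + ⟪v, T (u - v)⟫ := by
    rw [map_sub, inner_sub_left, inner_sub_right]
    ring
  rw [hdiff]
  have e1 : |⟪u - v, T u⟫| ≤ ‖s - t‖ * ‖s‖ := by
    calc |⟪u - v, T u⟫| ≤ Real.sqrt ⟪u - v, T (u - v)⟫ * Real.sqrt ⟪u, T u⟫ := habs _ _
      _ ≤ ‖s - t‖ * ‖s‖ := by
          apply mul_le_mul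
          · rw [huv]; exact hsqrtq _
          · exact hsqrtq s
          · exact Real.sqrt_nonneg _
          · exact norm_nonneg _
  have e2 : |⟪v, T (u - v)⟫| ≤ ‖t‖ * ‖s - t‖ := by
    calc |⟪v, T (u - v)⟫| ≤ Real.sqrt ⟪v, T v⟫ * Real.sqrt ⟪u - v, T (u - v)⟫ := habs _ _
      _ ≤ ‖t‖ * ‖s - t‖ := by
          apply mul_le_mul
          · exact hsqrtq t
          · rw [huv]; exact hsqrtq _
          · exact Real.sqrt_nonneg _
          · exact norm_nonneg _
  calc |⟪u - v, T u⟫ + ⟪v, T (u - v)⟫| ≤ |⟪u - v, T u⟫| + |⟪v, T (u - v)⟫| := abs_add_le _ _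
    _ ≤ ‖s - t‖ * ‖s‖ + ‖t‖ * ‖s - t‖ := add_le_add e1 e2
    _ ≤ 2 * ‖s - t‖ := by nlinarith [norm_nonneg (s - t), norm_nonneg s, norm_nonneg t]

end Aux

/-- Lipschitz continuity of the D-Undir objective `s ↦ sᵀ (I + L)⁻¹ L (I + L)⁻¹ s` on the
closed unit ball, with Lipschitz constant `2Δ(G)`, for the Laplacian `L` of a finite simple
graph `G` of maximum degree `Δ(G)`. -/
theorem dUndir_lipschitz {n : ℕ} (hn : 0 < n) (G : SimpleGraph (Fin n))
    [DecidableRel G.Adj] (s shat : EuclideanSpace ℝ (Fin n))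
    (hs : ‖s‖ ≤ 1) (hshat : ‖shat‖ ≤ 1) :
    |⟪s, Matrix.toEuclideanLin
          ((1 + G.lapMatrix ℝ)⁻¹ * G.lapMatrix ℝ * (1 + G.lapMatrix ℝ)⁻¹) s⟫ -
        ⟪shat, Matrix.toEuclideanLin
          ((1 + G.lapMatrix ℝ)⁻¹ * G.lapMatrix ℝ * (1 + G.lapMatrix ℝ)⁻¹) shat⟫| ≤
      2 * (G.maxDegree : ℝ) * ‖s - shat‖ := by
  set L := G.lapMatrix ℝ with hLdef
  by_cases hΔ : G.maxDegree = 0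
  · -- no edges: L = 0
    have hL0 : L = 0 := by
      ext i j
      have hdeg : ∀ v, G.degree v = 0 := fun v =>
        Nat.le_zero.mp (hΔ ▸ G.degree_le_maxDegree v)
      have hadj : ¬ G.Adj i j := by
        intro h
        have h0 : 0 < G.degree i := (G.degree_pos_iff_exists_adj i).mpr ⟨j, h⟩
        rw [hdeg i] at h0
        exact lt_irrefl 0 h0
      simp [hLdef, SimpleGraph.lapMatrix, SimpleGraph.degMatrix, hadj, hdeg, Matrix.of_apply,
        Matrix.sub_apply]
    rw [hL0]
    simp [hΔ]
  · have hL : L.PosSemidef := SimpleGraph.posSemidef_lapMatrix ℝ G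
    have hA : (1 + L).PosDef := Matrix.PosDef.one.add_posSemidef hL
    have hdet : IsUnit (1 + L).det := (Matrix.isUnit_iff_isUnit_det _).mp hA.isUnit
    set T := Matrix.toEuclideanLin L with hTdef
    set S := Matrix.toEuclideanLin (1 + L)⁻¹ with hSdef
    have hMKey : ∀ x, Matrix.toEuclideanLin ((1 + L)⁻¹ * L * (1 + L)⁻¹) x = S (T (S x)) := by
      intro x
      rw [toEuclideanLin_mul_apply, toEuclideanLin_mul_apply]
    have hT : ∀ x y, ⟪T x, y⟫ = ⟪x, T y⟫ :=
      Matrix.isHermitian_iff_isSymmetric.mp hL.1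
    have hS : ∀ x y, ⟪S x, y⟫ = ⟪x, S y⟫ :=
      Matrix.isHermitian_iff_isSymmetric.mp hA.isHermitian.inv
    have hTpos : ∀ x, 0 ≤ ⟪x, T x⟫ := by
      intro x
      rw [hTdef, inner_toEuclideanLin]
      simpa using hL.dotProduct_mulVec_nonneg (WithLp.equiv 2 _ x)
    have hinv : ∀ x, S x + T (S x) = x := by
      intro x
      have h1 : Matrix.toEuclideanLin ((1 + L) * (1 + L)⁻¹) x = x := by
        rw [Matrix.mul_nonsing_inv _ hdet]
        simp [Matrix.toEuclideanLin_apply, Matrix.one_mulVec]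
      rw [toEuclideanLin_mul_apply] at h1
      calc S x + T (S x) = Matrix.toEuclideanLin (1 + L) (S x) := by
            rw [map_add]
            simp only [LinearMap.add_apply]
            congr 1
            simp [Matrix.toEuclideanLin_apply, Matrix.one_mulVec]
        _ = x := h1
    have key := abstract_lipschitz T S hT hS hTpos hinv s shat hs hshat
    rw [hMKey, hMKey]
    have h1 : (1 : ℝ) ≤ (G.maxDegree : ℝ) := by
      have : 1 ≤ G.maxDegree := Nat.one_le_iff_ne_zero.mpr hΔ
      exact_mod_cast this
    calc |⟪s, S (T (S s))⟫ - ⟪shat, S (T (S shat))⟫| ≤ 2 * ‖s - shat‖ := key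
      _ ≤ 2 * (G.maxDegree : ℝ) * ‖s - shat‖ := by nlinarith [norm_nonneg (s - shat)]
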